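/- If f(z) = a_0 + ∑_{n≥1} a_n z^n is holomorphic on the unit disk D and maps D into D, then |a_n| ≤ 1 - |a_0|² for every n ≥ 1. -/

import Mathlib

open Complex Metric Filter

open Complex Metric Filter

/-- From a pointwise `HasSum` power-series representation on the unit ball, build a
`HasFPowerSeriesOnBall`. -/
lemma repSeries {g : ℂ → ℂ} {c : ℕ → ℂ}
    (hc : ∀ z ∈ ball (0:ℂ) 1, HasSum (fun k => c k * z ^ k) (g z)) :
    HasFPowerSeriesOnBall g (FormalMultilinearSeries.ofScalars ℂ c) 0 1 where
  r_le := by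
    apply ENNReal.le_of_forall_nnreal_lt
    intro r hr
    have hr1 : (r : ℝ) < 1 := by exact_mod_cast hr
    set r' : ℝ := ((r : ℝ) + 1) / 2 with hr'def
    have hr'0 : 0 ≤ r' := by positivity
    have hr'1 : r' < 1 := by simp only [hr'def]; linarith
    have hrr' : (r : ℝ) ≤ r' := by simp only [hr'def]; linarith
    have hz : ((r' : ℂ)) ∈ ball (0:ℂ) 1 := by
      simp [Complex.norm_real, _root_.abs_of_nonneg hr'0, hr'1]
    have hsum := (hc _ hz).summable
    have htend : Tendsto (fun k => ‖c k * (r' : ℂ) ^ k‖) atTop (nhds 0) := by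
      simpa using hsum.tendsto_atTop_zero.norm
    have htend' : Tendsto
        (fun k => ‖FormalMultilinearSeries.ofScalars ℂ c k‖ * (r'.toNNReal : ℝ) ^ k)
        atTop (nhds 0) := by
      refine htend.congr fun k => ?_
      rw [FormalMultilinearSeries.ofScalars_norm, norm_mul, norm_pow, Complex.norm_real,
        Real.norm_eq_abs, _root_.abs_of_nonneg hr'0, Real.coe_toNNReal _ hr'0]
    have := (FormalMultilinearSeries.ofScalars ℂ c).le_radius_of_tendsto htend'
    refine le_trans ?_ this
    exact_mod_cast ENNReal.coe_le_coe.2 (by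
      apply Real.toNNReal_mono at hrr'
      simpa [Real.toNNReal_coe] using hrr')
  r_pos := one_pos
  hasSum := by
    intro y hy
    have hy' : y ∈ ball (0:ℂ) 1 := by
      have : (1 : ENNReal) = ((1 : NNReal) : ENNReal) := by simp
      rw [this, Metric.emetric_ball_nnreal] at hy
      simpa using hy
    have := hc y hy'
    simp only [FormalMultilinearSeries.ofScalars_apply_eq, smul_eq_mul, zero_add]
    exact this

lemma repDiff {g : ℂ → ℂ} {c : ℕ → ℂ}
    (hc : ∀ z ∈ ball (0:ℂ) 1, HasSum (fun k => c k * z ^ k) (g z)) :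
    DifferentiableOn ℂ g (ball (0:ℂ) 1) := by
  have := (repSeries hc).differentiableOn
  have h1 : (1 : ENNReal) = ((1 : NNReal) : ENNReal) := by simp
  rwa [h1, Metric.emetric_ball_nnreal, NNReal.coe_one] at this

/-- Coefficients of a `HasSum` representation recover the iterated derivatives. -/
lemma repCoeff {g : ℂ → ℂ} {c : ℕ → ℂ}
    (hc : ∀ z ∈ ball (0:ℂ) 1, HasSum (fun k => c k * z ^ k) (g z)) (m : ℕ) :
    iteratedDeriv m g 0 = (m.factorial : ℂ) * c m := by
  have h := (repSeries hc).factorial_smul (1 : ℂ) m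
  rw [iteratedDeriv_eq_iteratedFDeriv, ← h, FormalMultilinearSeries.ofScalars_apply_eq]
  simp [nsmul_eq_mul]

/-- Cauchy estimate: a holomorphic function bounded by 1 on the unit ball has
`|g⁽ᵐ⁾(0)| ≤ m!`. -/
lemma cauchyBound {g : ℂ → ℂ} (hg : DifferentiableOn ℂ g (ball (0:ℂ) 1))
    (hb : ∀ z ∈ ball (0:ℂ) 1, ‖g z‖ ≤ 1) (m : ℕ) :
    ‖iteratedDeriv m g 0‖ ≤ m.factorial := by
  have key : ∀ r : ℝ, 0 < r → r < 1 →
      ‖iteratedDeriv m g 0‖ ≤ m.factorial * r⁻¹ ^ m := by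
    intro r hr0 hr1
    set R : NNReal := r.toNNReal with hRdef
    have hRr : (R : ℝ) = r := Real.coe_toNNReal _ hr0.le
    have hRpos : 0 < R := by simp [hRdef, hr0]
    have hsub : closedBall (0:ℂ) R ⊆ ball (0:ℂ) 1 := by
      rw [hRr]; exact (closedBall_subset_ball hr1)
    have hd : DifferentiableOn ℂ g (closedBall (0:ℂ) R) := hg.mono hsub
    have hp := hd.hasFPowerSeriesOnBall hRpos
    set p := cauchyPowerSeries g 0 R with hpdef
    have hder : iteratedDeriv m g 0 = m.factorial • (p m fun _ => (1:ℂ)) := by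
      rw [iteratedDeriv_eq_iteratedFDeriv, ← hp.factorial_smul (1:ℂ) m]
    have h1 : ‖p m fun _ => (1:ℂ)‖ ≤ ‖p m‖ := by
      have := (p m).le_opNorm fun _ => (1:ℂ)
      simpa using this
    have h2 : ‖p m‖ ≤ ((2 * Real.pi)⁻¹ * ∫ θ : ℝ in (0)..2 * Real.pi, ‖g (circleMap 0 R θ)‖) * |(R:ℝ)|⁻¹ ^ m :=
      norm_cauchyPowerSeries_le g 0 R m
    have hcirc : ∀ θ : ℝ, circleMap 0 R θ ∈ ball (0:ℂ) 1 := by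
      intro θ
      simp only [mem_ball, dist_zero_right]
      rw [show ‖circleMap 0 (R:ℝ) θ‖ = ‖circleMap 0 (R:ℝ) θ‖ from rfl,
        norm_circleMap_zero, hRr, abs_of_pos hr0]
      exact hr1
    have hcont : Continuous fun θ : ℝ => ‖g (circleMap 0 R θ)‖ := by
      apply Continuous.norm
      exact hg.continuousOn.comp_continuous (continuous_circleMap 0 R) (fun θ => hcirc θ)
    have hint : (∫ θ : ℝ in (0)..2 * Real.pi, ‖g (circleMap 0 R θ)‖) ≤ 2 * Real.pi := by
      have h2pi : (0:ℝ) ≤ 2 * Real.pi := by positivity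
      calc (∫ θ : ℝ in (0)..2 * Real.pi, ‖g (circleMap 0 R θ)‖)
          ≤ ∫ _ : ℝ in (0)..2 * Real.pi, (1:ℝ) := by
            apply intervalIntegral.integral_mono_on h2pi
              (hcont.intervalIntegrable _ _) (intervalIntegrable_const)
            intro θ _
            exact hb _ (hcirc θ)
        _ = 2 * Real.pi := by simp
    calc ‖iteratedDeriv m g 0‖
        = m.factorial * ‖p m fun _ => (1:ℂ)‖ := by
          rw [hder]; simp [nsmul_eq_mul, map_mul]
      _ ≤ m.factorial * (((2 * Real.pi)⁻¹ * ∫ θ : ℝ in (0)..2 * Real.pi, ‖g (circleMap 0 R θ)‖)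
            * |(R:ℝ)|⁻¹ ^ m) := by
          apply mul_le_mul_of_nonneg_left (h1.trans h2) (by positivity)
      _ ≤ m.factorial * (((2 * Real.pi)⁻¹ * (2 * Real.pi)) * |(R:ℝ)|⁻¹ ^ m) := by
          apply mul_le_mul_of_nonneg_left _ (by positivity)
          apply mul_le_mul_of_nonneg_right _ (by positivity)
          apply mul_le_mul_of_nonneg_left hint (by positivity)
      _ = m.factorial * r⁻¹ ^ m := by
          rw [inv_mul_cancel₀ (by positivity), one_mul, hRr, abs_of_pos hr0]
  have hlim : Tendsto (fun r : ℝ => (m.factorial : ℝ) * r⁻¹ ^ m) (nhdsWithin 1 (Set.Iio 1))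
      (nhds (m.factorial : ℝ)) := by
    have : Tendsto (fun r : ℝ => (m.factorial : ℝ) * r⁻¹ ^ m) (nhds 1)
        (nhds ((m.factorial : ℝ) * (1:ℝ)⁻¹ ^ m)) := by
      apply Tendsto.mul tendsto_const_nhds
      exact ((tendsto_id.inv₀ one_ne_zero).pow m)
    simpa using this.mono_left nhdsWithin_le_nhds
  apply ge_of_tendsto hlim
  filter_upwards [Ioo_mem_nhdsLT_of_mem (Set.mem_Ioc.2 ⟨(by norm_num : (1:ℝ)/2 < 1), le_rfl⟩)]
    with r hr
  exact key r (by linarith [hr.1]) hr.2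

section aux

/-- Möbius inequality: |w - v| ≤ |1 - v̄ w| for v, w in the unit disk. -/
lemma mobius_abs {v w : ℂ} (hv : ‖v‖ < 1) (hw : ‖w‖ < 1) :
    ‖w - v‖ ≤ ‖1 - (starRingEnd ℂ) v * w‖ := by
  have hv2 : Complex.normSq v ≤ 1 := by
    rw [← Complex.sq_norm]; nlinarith [norm_nonneg v]
  have hw2 : Complex.normSq w ≤ 1 := by
    rw [← Complex.sq_norm]; nlinarith [norm_nonneg w]
  rw [Complex.norm_def, Complex.norm_def]
  apply Real.sqrt_le_sqrt
  have key : Complex.normSq (1 - (starRingEnd ℂ) v * w) - Complex.normSq (w - v)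
      = (1 - Complex.normSq v) * (1 - Complex.normSq w) := by
    simp only [Complex.normSq_apply, Complex.sub_re, Complex.sub_im, Complex.mul_re,
      Complex.mul_im, Complex.one_re, Complex.one_im, Complex.conj_re, Complex.conj_im]
    ring
  nlinarith [key]

lemma mobius_ne {v w : ℂ} (hv : ‖v‖ < 1) (hw : ‖w‖ < 1) :
    1 - (starRingEnd ℂ) v * w ≠ 0 := by
  intro h
  have h1 : (starRingEnd ℂ) v * w = 1 := by linear_combination -h
  have h2 : ‖(starRingEnd ℂ) v * w‖ = 1 := by rw [h1]; simp
  rw [norm_mul, Complex.norm_conj] at h2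
  nlinarith [norm_nonneg v, norm_nonneg w]

/-- Taylor series representation on the unit ball. -/
lemma taylorRep {g : ℂ → ℂ} (hg : DifferentiableOn ℂ g (ball (0:ℂ) 1)) :
    ∀ z ∈ ball (0:ℂ) 1, HasSum (fun k => (iteratedDeriv k g 0 / k.factorial) * z ^ k) (g z) := by
  intro z hz
  have h := Complex.hasSum_taylorSeries_on_ball hg hz
  rw [show (fun k => iteratedDeriv k g 0 / (k.factorial : ℂ) * z ^ k)
      = fun k => ((k.factorial : ℂ))⁻¹ • (z - 0) ^ k • iteratedDeriv k g 0 from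
    funext fun k => by rw [smul_eq_mul, smul_eq_mul, sub_zero, div_eq_mul_inv]; ring]
  exact h

end aux
theorem stmt_5 (f : ℂ → ℂ) (hf : DifferentiableOn ℂ f (ball (0:ℂ) 1))
    (hmap : ∀ z ∈ ball (0:ℂ) 1, ‖f z‖ < 1)
    (a : ℕ → ℂ) (ha : ∀ n, a n = iteratedDeriv n f 0 / (Nat.factorial n)) :
    ∀ n : ℕ, 1 ≤ n → ‖a n‖ ≤ 1 - ‖a 0‖ ^ 2 := by
  intro n hn
  have hnne : n ≠ 0 := by omega
  have hnC : (n : ℂ) ≠ 0 := Nat.cast_ne_zero.2 hnne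
  have h0mem : (0:ℂ) ∈ ball (0:ℂ) 1 := by simp
  have ha0 : a 0 = f 0 := by rw [ha 0]; simp [iteratedDeriv_zero]
  have ha0lt : ‖a 0‖ < 1 := by rw [ha0]; exact hmap 0 h0mem
  -- Taylor representation of f
  have hfrep : ∀ z ∈ ball (0:ℂ) 1, HasSum (fun k => a k * z ^ k) (f z) := by
    intro z hz
    have h := taylorRep hf z hz
    rw [show (fun k => a k * z ^ k) = fun k => (iteratedDeriv k f 0 / (k.factorial : ℂ)) * z ^ k
      from funext fun k => by rw [ha k]]
    exact h
  -- the primitive root of unity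
  set ζ : ℂ := Complex.exp (2 * (Real.pi:ℂ) * Complex.I / n) with hζdef
  have hprim : IsPrimitiveRoot ζ n := Complex.isPrimitiveRoot_exp n hnne
  have hζabs : ‖ζ‖ = 1 := by
    rw [hζdef, show 2 * (Real.pi:ℂ) * Complex.I / n = ((2 * Real.pi / n : ℝ):ℂ) * Complex.I by
      push_cast; ring]
    exact Complex.norm_exp_ofReal_mul_I _
  have hmemrot : ∀ (j : ℕ) (z : ℂ), z ∈ ball (0:ℂ) 1 → ζ ^ j * z ∈ ball (0:ℂ) 1 := by
    intro j z hz
    simp only [mem_ball, dist_zero_right] at hz ⊢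
    rw [norm_mul, norm_pow]
    rw [show ‖ζ‖ = ‖ζ‖ from rfl, hζabs]
    simpa using hz
  -- the averaged function h and its coefficients c
  set c : ℕ → ℂ := fun k => if n ∣ k then a k else 0 with hcdef
  set h : ℂ → ℂ := fun z => (n:ℂ)⁻¹ * ∑ j ∈ Finset.range n, f (ζ ^ j * z) with hhdef
  have hrep : ∀ z ∈ ball (0:ℂ) 1, HasSum (fun k => c k * z ^ k) (h z) := by
    intro z hz
    have hS : ∀ j ∈ Finset.range n, HasSum (fun k => a k * (ζ ^ j * z) ^ k) (f (ζ ^ j * z)) :=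
      fun j _ => hfrep _ (hmemrot j z hz)
    have hsum := (hasSum_sum hS).mul_left ((n:ℂ)⁻¹)
    have hfun : (fun k => (n:ℂ)⁻¹ * ∑ j ∈ Finset.range n, a k * (ζ ^ j * z) ^ k)
        = fun k => c k * z ^ k := by
      funext k
      have hterm : ∀ j, a k * (ζ ^ j * z) ^ k = (ζ ^ k) ^ j * (a k * z ^ k) := by
        intro j
        rw [mul_pow, ← pow_mul, ← pow_mul', pow_mul]
        ring
      rw [Finset.sum_congr rfl (fun j _ => hterm j), ← Finset.sum_mul]
      by_cases hdvd : n ∣ k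
      · have hone : ζ ^ k = 1 := (hprim.pow_eq_one_iff_dvd k).2 hdvd
        simp only [hone, one_pow, Finset.sum_const, Finset.card_range, nsmul_eq_mul, mul_one,
          hcdef, if_pos hdvd]
        rw [← mul_assoc, inv_mul_cancel₀ hnC, one_mul]
      · have hne : ζ ^ k ≠ 1 := fun hone => hdvd ((hprim.pow_eq_one_iff_dvd k).1 hone)
        have hzero : ∑ j ∈ Finset.range n, (ζ ^ k) ^ j = 0 := by
          rw [geom_sum_eq hne n, ← pow_mul, pow_mul', hprim.pow_eq_one, one_pow]
          simp
        simp [hzero, hcdef, if_neg hdvd]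
    rwa [hfun] at hsum
  have hdiffh : DifferentiableOn ℂ h (ball (0:ℂ) 1) := repDiff hrep
  have hh0 : h 0 = a 0 := by
    have h1 := repCoeff hrep 0
    rw [iteratedDeriv_zero] at h1
    rw [h1]
    simp [hcdef]
  have hhlt : ∀ z ∈ ball (0:ℂ) 1, ‖h z‖ < 1 := by
    intro z hz
    have habs : ‖h z‖
        ≤ (n:ℝ)⁻¹ * ∑ j ∈ Finset.range n, ‖f (ζ ^ j * z)‖ := by
      rw [hhdef]
      simp only [norm_mul, norm_inv, Complex.norm_natCast]
      gcongr
      exact norm_sum_le _ _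
    have hsumlt : ∑ j ∈ Finset.range n, ‖f (ζ ^ j * z)‖
        < ∑ _j ∈ Finset.range n, (1:ℝ) := by
      apply Finset.sum_lt_sum_of_nonempty
      · exact Finset.nonempty_range_iff.2 hnne
      · intro j _
        exact hmap _ (hmemrot j z hz)
    have hnpos : (0:ℝ) < (n:ℝ)⁻¹ := by positivity
    calc ‖h z‖ ≤ (n:ℝ)⁻¹ * ∑ j ∈ Finset.range n, ‖f (ζ ^ j * z)‖ := habs
      _ < (n:ℝ)⁻¹ * ∑ _j ∈ Finset.range n, (1:ℝ) := by
          exact mul_lt_mul_of_pos_left hsumlt hnpos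
      _ = 1 := by
          simp only [Finset.sum_const, Finset.card_range, nsmul_eq_mul, mul_one]
          rw [inv_mul_cancel₀ (by exact_mod_cast hnne : (n:ℝ) ≠ 0)]
  -- the Möbius denominator u
  set u : ℂ → ℂ := fun z => 1 - (starRingEnd ℂ) (a 0) * h z with hudef
  have hune : ∀ z ∈ ball (0:ℂ) 1, u z ≠ 0 := fun z hz => mobius_ne ha0lt (hhlt z hz)
  have hudiff : DifferentiableOn ℂ u (ball (0:ℂ) 1) :=
    (differentiableOn_const _).sub ((differentiableOn_const _).mul hdiffh)
  -- the slope function w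
  set w : ℂ → ℂ := fun z => if z = 0 then a n else (h z - a 0) / z ^ n with hwdef
  have hwrep : ∀ z ∈ ball (0:ℂ) 1, HasSum (fun k => c (k + n) * z ^ k) (w z) := by
    intro z hz
    have hsum0 : ∑ i ∈ Finset.range n, c i * z ^ i = a 0 := by
      rw [Finset.sum_eq_single 0]
      · simp [hcdef]
      · intro i hi hine
        have : ¬ n ∣ i := by
          intro hdvd
          exact hine (Nat.eq_zero_of_dvd_of_lt hdvd (Finset.mem_range.1 hi))
        simp [hcdef, this]
      · intro h0
        exact absurd (Finset.mem_range.2 (by omega)) h0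
    have hshift : HasSum (fun k => c (k + n) * z ^ (k + n)) (h z - a 0) := by
      apply (hasSum_nat_add_iff (f := fun k => c k * z ^ k) n).2
      rw [hsum0, sub_add_cancel]
      exact hrep z hz
    by_cases hz0 : z = 0
    · subst hz0
      have : w 0 = a n := by simp [hwdef]
      rw [this]
      have h0 : (fun k => c (k + n) * (0:ℂ) ^ k) 0 = a n := by
        simp [hcdef]
      rw [← h0]
      apply hasSum_single 0
      intro k hk
      simp [zero_pow hk]
    · have hzn : (z ^ n) ≠ 0 := pow_ne_zero _ hz0
      have := hshift.mul_left ((z ^ n)⁻¹)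
      have hfun : (fun k => (z ^ n)⁻¹ * (c (k + n) * z ^ (k + n)))
          = fun k => c (k + n) * z ^ k := by
        funext k
        rw [pow_add]
        field_simp
      rw [hfun] at this
      have hwz : w z = (z ^ n)⁻¹ * (h z - a 0) := by
        rw [hwdef]
        simp only [if_neg hz0]
        rw [div_eq_mul_inv, mul_comm]
      rwa [← hwz] at this
  have hwdiff : DifferentiableOn ℂ w (ball (0:ℂ) 1) := repDiff hwrep
  -- Φ and ψ
  set Φ : ℂ → ℂ := fun z => w z * (u z)⁻¹ with hΦdef
  have hΦdiff : DifferentiableOn ℂ Φ (ball (0:ℂ) 1) := hwdiff.mul (hudiff.inv hune)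
  set ψ : ℂ → ℂ := fun z => z ^ n * Φ z with hψdef
  have hψdiff : DifferentiableOn ℂ ψ (ball (0:ℂ) 1) :=
    ((differentiable_pow n).differentiableOn).mul hΦdiff
  have hψeq : ∀ z ∈ ball (0:ℂ) 1, ψ z = (h z - a 0) * (u z)⁻¹ := by
    intro z _
    by_cases hz0 : z = 0
    · subst hz0
      simp [hψdef, hh0, zero_pow hnne]
    · have hzn : (z ^ n) ≠ 0 := pow_ne_zero _ hz0
      simp only [hψdef, hΦdef, hwdef, if_neg hz0]
      field_simp
  have hψle : ∀ z ∈ ball (0:ℂ) 1, ‖ψ z‖ ≤ 1 := by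
    intro z hz
    rw [hψeq z hz, norm_mul, norm_inv]
    have h1 : ‖h z - a 0‖ ≤ ‖u z‖ := mobius_abs ha0lt (hhlt z hz)
    have h2 : 0 < ‖u z‖ := by
      rw [norm_pos_iff]
      exact hune z hz
    have := (div_le_one h2).2 h1
    rwa [div_eq_mul_inv] at this
  -- coefficient extraction for ψ
  set φ : ℕ → ℂ := fun k => iteratedDeriv k Φ 0 / k.factorial with hφdef
  have hΦrep : ∀ z ∈ ball (0:ℂ) 1, HasSum (fun k => φ k * z ^ k) (Φ z) := taylorRep hΦdiff
  set b : ℕ → ℂ := fun k => if n ≤ k then φ (k - n) else 0 with hbdef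
  have hψrep : ∀ z ∈ ball (0:ℂ) 1, HasSum (fun k => b k * z ^ k) (ψ z) := by
    intro z hz
    have h1 := (hΦrep z hz).mul_left (z ^ n)
    have hfun : (fun k => z ^ n * (φ k * z ^ k)) = fun k => b (k + n) * z ^ (k + n) := by
      funext k
      rw [hbdef]
      simp only [if_pos (Nat.le_add_left n k), Nat.add_sub_cancel]
      rw [pow_add]
      ring
    rw [hfun] at h1
    have h2 := (hasSum_nat_add_iff (f := fun k => b k * z ^ k) n).1 h1
    have hzero : ∑ i ∈ Finset.range n, b i * z ^ i = 0 := by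
      apply Finset.sum_eq_zero
      intro i hi
      rw [hbdef]
      simp [Nat.not_le.2 (Finset.mem_range.1 hi)]
    rwa [hzero, add_zero] at h2
  have hcoeff : iteratedDeriv n ψ 0 = (n.factorial : ℂ) * b n := repCoeff hψrep n
  have hbound : ‖iteratedDeriv n ψ 0‖ ≤ n.factorial := cauchyBound hψdiff hψle n
  -- compute b n
  have hbn : b n = a n * (u 0)⁻¹ := by
    rw [hbdef]
    simp only [if_pos le_rfl, Nat.sub_self, hφdef, iteratedDeriv_zero, Nat.factorial_zero,
      Nat.cast_one, div_one]
    rw [hΦdef]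
    simp [hwdef]
  have hu0 : ‖u 0‖ = 1 - ‖a 0‖ ^ 2 := by
    have : u 0 = ((1 - ‖a 0‖ ^ 2 : ℝ) : ℂ) := by
      rw [hudef]
      simp only [hh0]
      rw [mul_comm, Complex.mul_conj, Complex.sq_norm]
      push_cast
      ring
    rw [this, Complex.norm_real, Real.norm_eq_abs, abs_of_pos (by nlinarith [norm_nonneg (a 0)])]
  -- conclude
  have hd : 0 < 1 - ‖a 0‖ ^ 2 := by nlinarith [norm_nonneg (a 0)]
  rw [hcoeff, norm_mul, hbn, norm_mul, norm_inv, hu0] at hbound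
  have hfac : (0:ℝ) < n.factorial := by exact_mod_cast n.factorial_pos
  have habsfac : ‖(n.factorial : ℂ)‖ = (n.factorial : ℝ) := by
    simp [Complex.norm_natCast]
  rw [habsfac] at hbound
  have h3 : ‖a n‖ * (1 - ‖a 0‖ ^ 2)⁻¹ ≤ 1 := by
    have := le_of_mul_le_mul_left (by linarith [hbound] : (n.factorial : ℝ) *
      (‖a n‖ * (1 - ‖a 0‖ ^ 2)⁻¹) ≤ (n.factorial : ℝ) * 1) hfac
    exact this
  rw [← div_eq_mul_inv, div_le_one hd] at h3
  exact h3
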